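/- If G is a torsion-free group with a normal subgroup N free abelian of rank 2 and finite index such that G/N acts faithfully on N by conjugation, then [G : N] ≤ 2. -/

import Mathlib

open Multiplicative

/-- The additive endomorphism of `ℤ × ℤ` underlying an automorphism of
`Multiplicative (ℤ × ℤ)`. -/
private def Fh (σ : MulAut (Multiplicative (ℤ × ℤ))) : (ℤ × ℤ) →+ (ℤ × ℤ) where
  toFun v := toAdd (σ (ofAdd v))
  map_zero' := by simp
  map_add' x y := by
    simp [ofAdd_add, map_mul]

private lemma Fh_apply (σ : MulAut (Multiplicative (ℤ × ℤ))) (v : ℤ × ℤ) :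
    Fh σ v = ((Fh σ (1, 0)).1 * v.1 + (Fh σ (0, 1)).1 * v.2,
      (Fh σ (1, 0)).2 * v.1 + (Fh σ (0, 1)).2 * v.2) := by
  have hv : v = v.1 • ((1 : ℤ), (0 : ℤ)) + v.2 • ((0 : ℤ), (1 : ℤ)) := by
    ext <;> simp
  rw [hv, map_add, map_zsmul, map_zsmul]
  ext <;> simp [mul_comm]

private lemma Fh_one (v : ℤ × ℤ) : Fh 1 v = v := by simp [Fh]

private lemma Fh_mul (σ τ : MulAut (Multiplicative (ℤ × ℤ))) (v : ℤ × ℤ) :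
    Fh (σ * τ) v = Fh σ (Fh τ v) := by
  simp [Fh, MulAut.mul_apply]

/-- Determinant of the automorphism. -/
private def ddet (σ : MulAut (Multiplicative (ℤ × ℤ))) : ℤ :=
  (Fh σ (1, 0)).1 * (Fh σ (0, 1)).2 - (Fh σ (1, 0)).2 * (Fh σ (0, 1)).1

private lemma ddet_mul (σ τ : MulAut (Multiplicative (ℤ × ℤ))) :
    ddet (σ * τ) = ddet σ * ddet τ := by
  simp only [ddet, Fh_mul]
  rw [Fh_apply σ (Fh τ (1, 0)), Fh_apply σ (Fh τ (0, 1))]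
  ring

private lemma ddet_one : ddet 1 = 1 := by simp [ddet, Fh_one]

private lemma ddet_pm (σ : MulAut (Multiplicative (ℤ × ℤ))) :
    ddet σ = 1 ∨ ddet σ = -1 := by
  have h : ddet σ * ddet σ⁻¹ = 1 := by
    rw [← ddet_mul, mul_inv_cancel, ddet_one]
  exact Int.isUnit_iff.mp (IsUnit.of_mul_eq_one _ h)

private lemma ddet_inv (σ : MulAut (Multiplicative (ℤ × ℤ))) (h : ddet σ = -1) :
    ddet σ⁻¹ = -1 := by
  have h2 : ddet σ * ddet σ⁻¹ = 1 := by
    rw [← ddet_mul, mul_inv_cancel, ddet_one]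
  rw [h] at h2; linarith

/-- The key linear-algebra lemma: a finite-order automorphism of `ℤ²` fixing a
nonzero vector is either the identity or has determinant `-1`. -/
private lemma ddet_eq_neg_one (σ : MulAut (Multiplicative (ℤ × ℤ))) (n : ℕ) (hn : n ≠ 0)
    (hσn : σ ^ n = 1) (v : ℤ × ℤ) (hv : v ≠ 0) (hfix : Fh σ v = v) (hσ : σ ≠ 1) :
    ddet σ = -1 := by
  set a := (Fh σ (1, 0)).1 with ha
  set b := (Fh σ (1, 0)).2 with hb
  set c := (Fh σ (0, 1)).1 with hc
  set d := (Fh σ (0, 1)).2 with hd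
  have hfix' := hfix
  rw [Fh_apply] at hfix'
  have h1 : (a - 1) * v.1 + c * v.2 = 0 := by
    have := congrArg Prod.fst hfix'
    simp at this; linarith
  have h2 : b * v.1 + (d - 1) * v.2 = 0 := by
    have := congrArg Prod.snd hfix'
    simp at this; linarith
  have hdet0 : (a - 1) * (d - 1) - b * c = 0 := by
    have hx : ((a - 1) * (d - 1) - b * c) * v.1 = 0 := by linear_combination (d - 1) * h1 - c * h2
    have hy : ((a - 1) * (d - 1) - b * c) * v.2 = 0 := by linear_combination (a - 1) * h2 - b * h1
    rcases mul_eq_zero.mp hx with h | h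
    · exact h
    rcases mul_eq_zero.mp hy with h' | h'
    · exact h'
    exact absurd (Prod.ext h h') hv
  rcases ddet_pm σ with h | h
  · exfalso
    have hdet : a * d - b * c = 1 := h
    have htr : a + d = 2 := by nlinarith [hdet, hdet0]
    -- (σ - 1)² = 0, so σ^n = 1 + n(σ - 1) forcing σ = 1
    have hFF : ∀ w : ℤ × ℤ, Fh σ (Fh σ w) = (2 : ℤ) • Fh σ w - w := by
      intro w
      rw [Fh_apply σ w, Fh_apply σ _]
      ext
      · simp [← ha, ← hb, ← hc, ← hd]
        linear_combination (a * w.1 + c * w.2) * htr - w.1 * hdet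
      · simp [← ha, ← hb, ← hc, ← hd]
        linear_combination (b * w.1 + d * w.2) * htr - w.2 * hdet
    have hiter : ∀ (k : ℕ) (w : ℤ × ℤ), Fh (σ ^ k) w = w + (k : ℤ) • (Fh σ w - w) := by
      intro k
      induction k with
      | zero => intro w; simp [Fh_one]
      | succ m ih =>
        intro w
        rw [pow_succ, Fh_mul, ih (Fh σ w), hFF w]
        push_cast
        module
    have hfixall : ∀ w : ℤ × ℤ, Fh σ w = w := by
      intro w
      have := hiter n w
      rw [hσn, Fh_one] at this
      have h0 : (n : ℤ) • (Fh σ w - w) = 0 := (left_eq_add.mp this).symm ▸ rfl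
      have h1 : Fh σ w - w = 0 := by
        rcases smul_eq_zero.mp h0 with h' | h'
        · exact absurd h' (by exact_mod_cast hn)
        · exact h'
      exact sub_eq_zero.mp h1
    apply hσ
    ext1 x
    have : Fh σ (toAdd x) = toAdd x := hfixall (toAdd x)
    simpa [Fh] using congrArg ofAdd this
  · exact h

theorem stmt14 (G : Type*) [Group G]
    (htf : ∀ g : G, g ≠ 1 → ¬ IsOfFinOrder g)
    (N : Subgroup G) [N.Normal]
    (hN2 : Nonempty (↥N ≃* Multiplicative (ℤ × ℤ)))
    (hfin : N.FiniteIndex)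
    (hfaith : ∀ g : G, (∀ x ∈ N, g * x * g⁻¹ = x) → g ∈ N) :
    Nat.card (G ⧸ N) ≤ 2 := by
  classical
  obtain ⟨e⟩ := hN2
  set Φ : G →* MulAut (Multiplicative (ℤ × ℤ)) :=
    (MulAut.congr e).toMonoidHom.comp MulAut.conjNormal with hΦ
  -- N is abelian
  have hNcomm : ∀ x y : ↥N, x * y = y * x := fun x y =>
    e.injective (by rw [map_mul, map_mul, mul_comm])
  -- g ∈ N → Φ g = 1
  have hker : ∀ g ∈ N, Φ g = 1 := by
    intro g hg
    have hconj : MulAut.conjNormal (H := N) g = 1 := by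
      ext x
      have := hNcomm ⟨g, hg⟩ x
      have : g * (x : G) = (x : G) * g := congrArg Subtype.val this
      simp [MulAut.conjNormal_apply]
      group
      rw [this]
      group
    have h0 : Φ g = (MulAut.congr e) (MulAut.conjNormal g) := rfl
    rw [h0, hconj, map_one]
  -- Φ g = 1 → g ∈ N
  have hker' : ∀ g : G, Φ g = 1 → g ∈ N := by
    intro g hg
    apply hfaith
    intro x hx
    have hconj : MulAut.conjNormal (H := N) g = 1 := by
      have : (MulAut.congr e) (MulAut.conjNormal g) = 1 := hg
      exact (MulAut.congr e).injective (this.trans (map_one _).symm)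
    have := congrArg Subtype.val (DFunLike.congr_fun hconj ⟨x, hx⟩)
    simpa using this
  -- key: g ∉ N → ddet (Φ g) = -1
  have key : ∀ g : G, g ∉ N → ddet (Φ g) = -1 := by
    intro g hg
    have hg1 : g ≠ 1 := fun h => hg (h ▸ N.one_mem)
    have hn : N.index ≠ 0 := hfin.index_ne_zero
    have hgn : g ^ N.index ∈ N := N.pow_index_mem g
    have hs : g ^ N.index ≠ 1 := by
      intro h
      exact htf g hg1 (isOfFinOrder_iff_pow_eq_one.mpr ⟨N.index, Nat.pos_of_ne_zero hn, h⟩)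
    set v : ℤ × ℤ := toAdd (e ⟨g ^ N.index, hgn⟩) with hv'
    have hv : v ≠ 0 := by
      simp only [hv', ne_eq]
      intro h
      have : e ⟨g ^ N.index, hgn⟩ = 1 := by
        have := congrArg ofAdd h
        simpa using this
      exact hs (congrArg Subtype.val (e.injective (this.trans (map_one _).symm)))
    have hfix : Fh (Φ g) v = v := by
      show toAdd (Φ g (ofAdd v)) = v
      have h1 : ofAdd v = e ⟨g ^ N.index, hgn⟩ := by simp [hv']
      rw [h1]
      have h2 : Φ g (e ⟨g ^ N.index, hgn⟩) = e (MulAut.conjNormal g ⟨g ^ N.index, hgn⟩) := by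
        simp [hΦ, MulAut.congr]
      rw [h2]
      have h3 : MulAut.conjNormal (H := N) g ⟨g ^ N.index, hgn⟩ = ⟨g ^ N.index, hgn⟩ := by
        ext
        show g * g ^ N.index * g⁻¹ = g ^ N.index
        group
      rw [h3]
    have hpow : (Φ g) ^ N.index = 1 := by
      rw [← map_pow]
      exact hker _ hgn
    have hne : Φ g ≠ 1 := fun h => hg (hker' g h)
    exact ddet_eq_neg_one (Φ g) N.index hn hpow v hv hfix hne
  -- any two nontrivial cosets are equal
  have hsame : ∀ x y : G ⧸ N, x ≠ 1 → y ≠ 1 → x = y := by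
    intro x y hx hy
    obtain ⟨g, rfl⟩ := QuotientGroup.mk_surjective x
    obtain ⟨h, rfl⟩ := QuotientGroup.mk_surjective y
    have hgN : g ∉ N := fun hm => hx ((QuotientGroup.eq_one_iff g).mpr hm)
    have hhN : h ∉ N := fun hm => hy ((QuotientGroup.eq_one_iff h).mpr hm)
    rw [QuotientGroup.eq]
    by_contra hgh
    have k1 := key g hgN
    have k2 := key h hhN
    have k3 := key (g⁻¹ * h) hgh
    have : ddet (Φ (g⁻¹ * h)) = ddet (Φ g)⁻¹ * ddet (Φ h) := by
      rw [map_mul, map_inv, ddet_mul]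
    rw [this, ddet_inv _ k1, k2] at k3
    norm_num at k3
  -- conclude
  have hinj : Function.Injective (fun x : G ⧸ N => (x = 1 : Prop)) := by
    intro x y hxy
    have hiff : (x = 1) ↔ (y = 1) := iff_of_eq hxy
    by_cases hx : x = 1
    · rw [hx, (hiff.mp hx).symm.symm]
    · by_cases hy : y = 1
      · exact absurd (hiff.mpr hy) hx
      · exact hsame x y hx hy
  calc Nat.card (G ⧸ N) ≤ Nat.card Prop := Nat.card_le_card_of_injective _ hinj
    _ = 2 := by simp [Nat.card_eq_fintype_card]
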